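/- Let K ⊆ S_n be a subset that admits a unique minimal element u with respect to the Bruhat order, and let σ_1, σ_2 ∈ S_n. Then the set I(σ_1) K I(σ_2) = {a x b : a ≤ σ_1, x ∈ K, b ≤ σ_2} has a unique minimal element with respect to the Bruhat order; moreover the set I(σ_1) u I(σ_2) = {a u b : a ≤ σ_1, b ≤ σ_2} also has a unique minimal element, and these two minimal elements coincide. -/

import Mathlib

open scoped Classical

namespace KK

/-- The simple transposition `s_j = (j, j+1)` in `S_n` (1-indexed letters `1 ≤ j ≤ n-1`);
junk value `1` out of range. -/
def simpleRefl (n : ℕ) (j : ℕ) : Equiv.Perm (Fin n) :=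
  if h : 1 ≤ j ∧ j ≤ n - 1 then
    Equiv.swap ⟨j - 1, by omega⟩ ⟨j, by omega⟩
  else 1

/-- The permutation represented by a word in the simple transpositions. -/
def wordProd (n : ℕ) (l : List ℕ) : Equiv.Perm (Fin n) :=
  (l.map (simpleRefl n)).prod

/-- Coxeter length: minimal length of a word in simple transpositions representing `w`. -/
noncomputable def len (n : ℕ) (w : Equiv.Perm (Fin n)) : ℕ :=
  sInf {k | ∃ l : List ℕ, (∀ j ∈ l, 1 ≤ j ∧ j ≤ n - 1) ∧ l.length = k ∧ wordProd n l = w}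

/-- A word is reduced if its letters are genuine simple-transposition indices and its
length equals the Coxeter length of the permutation it represents. -/
def IsReduced (n : ℕ) (l : List ℕ) : Prop :=
  (∀ j ∈ l, 1 ≤ j ∧ j ≤ n - 1) ∧ len n (wordProd n l) = l.length

/-- Bruhat order on `S_n`: `u ≤ w` iff some reduced word for `w` contains a reduced word
for `u` as a subword. -/
def bruhatLE (n : ℕ) (u w : Equiv.Perm (Fin n)) : Prop :=
  ∃ l l' : List ℕ, IsReduced n l ∧ wordProd n l = w ∧
    l'.Sublist l ∧ IsReduced n l' ∧ wordProd n l' = u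

/-- `m` is the greatest element of `K` in the Bruhat order (hence the unique maximal one). -/
def IsBruhatGreatest (n : ℕ) (K : Set (Equiv.Perm (Fin n))) (m : Equiv.Perm (Fin n)) : Prop :=
  m ∈ K ∧ ∀ u ∈ K, bruhatLE n u m

/-- `m` is the least element of `K` in the Bruhat order (hence the unique minimal one). -/
def IsBruhatLeast (n : ℕ) (K : Set (Equiv.Perm (Fin n))) (m : Equiv.Perm (Fin n)) : Prop :=
  m ∈ K ∧ ∀ u ∈ K, bruhatLE n m u

/-- One step of the Demazure product: `w * s_j = max {w, w s_j}` in the Bruhat order. -/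
noncomputable def demStep (n : ℕ) (w : Equiv.Perm (Fin n)) (j : ℕ) : Equiv.Perm (Fin n) :=
  if len n w < len n (w * simpleRefl n j) then w * simpleRefl n j else w

/-- The Demazure product `*(w)` of a (not necessarily reduced) word. -/
noncomputable def demProd (n : ℕ) (l : List ℕ) : Equiv.Perm (Fin n) :=
  l.foldl (demStep n) 1

/-- The binary Demazure product of two permutations, `w * w' = max I(w)I(w')`. -/
noncomputable def demMul (n : ℕ) (w w' : Equiv.Perm (Fin n)) : Equiv.Perm (Fin n) :=
  if h : ∃ m, IsBruhatGreatest n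
      {x | ∃ u v, bruhatLE n u w ∧ bruhatLE n v w' ∧ x = u * v} m
  then h.choose else 1

/-- The longest element `w₀` of `S_n`. -/
def w0 (n : ℕ) : Equiv.Perm (Fin n) := Fin.revPerm



/-- `μ` is a partition with `n` nonnegative integer parts `μ 1 ≥ ⋯ ≥ μ n ≥ 0`. -/
def IsPartition (n : ℕ) (μ : ℕ → ℤ) : Prop :=
  (∀ i, 1 ≤ i → i < n → μ (i + 1) ≤ μ i) ∧ 0 ≤ μ n

/-- `(i, j)` indexes an entry strictly below the top in the triangular array:
`n ≥ i > j ≥ 1`. -/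
def inTriangle (n : ℕ) (p : ℕ × ℕ) : Prop := 1 ≤ p.2 ∧ p.2 < p.1 ∧ p.1 ≤ n

/-- A Gelfand–Tsetlin pattern of size `n`, encoded as a function `a : ℕ → ℕ → ℝ`
(value `a i j` for `n ≥ i ≥ j ≥ 1`, and `0` outside the triangle). -/
def IsGTArray (n : ℕ) (a : ℕ → ℕ → ℝ) : Prop :=
  (∀ i j, 1 ≤ j → j < i → i ≤ n →
      0 ≤ a i j - a (i - 1) j ∧ 0 ≤ a (i - 1) j - a i (j + 1)) ∧
  (∀ i j, j = 0 ∨ i < j ∨ n < i → a i j = 0)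

/-- The Gelfand–Tsetlin polytope `GT(μ)`: GT patterns of size `n` with bottom row `μ`. -/
def GTset (n : ℕ) (μ : ℕ → ℤ) : Set (ℕ → ℕ → ℝ) :=
  {a | IsGTArray n a ∧ ∀ j, 1 ≤ j → j ≤ n → a n j = (μ j : ℝ)}

/-- The integral points `GT_ℤ(μ)` of the Gelfand–Tsetlin polytope. -/
def GTZ (n : ℕ) (μ : ℕ → ℤ) : Set (ℕ → ℕ → ℝ) :=
  {a ∈ GTset n μ | ∀ i j, ∃ m : ℤ, a i j = (m : ℝ)}

/-- The weight of a GT pattern: `wt a i = Σ_{j=1}^i a i j − Σ_{j=1}^{i-1} a (i-1) j`. -/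
noncomputable def wt (a : ℕ → ℕ → ℝ) (i : ℕ) : ℝ :=
  (∑ j ∈ Finset.Icc 1 i, a i j) - ∑ j ∈ Finset.Icc 1 (i - 1), a (i - 1) j

/-- The pairs `(i,j)` with `n ≥ i > j ≥ 1` in increasing lexicographic order. -/
def pairsLex (n : ℕ) : List (ℕ × ℕ) :=
  (List.range' 2 (n - 1)).flatMap fun i => (List.range' 1 (i - 1)).map fun j => (i, j)

/-- The pairs `(i,j)` with `n ≥ i > j ≥ 1` in increasing order for the total order in
which `(i,j)` precedes `(i',j')` iff `i < i'`, or `i = i'` and `j > j'`. -/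
def pairsBar (n : ℕ) : List (ℕ × ℕ) :=
  (List.range' 2 (n - 1)).flatMap fun i => ((List.range' 1 (i - 1)).reverse).map fun j => (i, j)

/-- The pairs `(i,j)` with `n ≥ i > j ≥ 1` in decreasing order for the total order in
which `(i,j)` precedes `(i',j')` iff `i < i'`, or `i = i'` and `j > j'`:
`i` descending and, within each `i`, `j` ascending. -/
def pairsFin (n : ℕ) : List (ℕ × ℕ) :=
  ((List.range' 2 (n - 1)).reverse).flatMap fun i => (List.range' 1 (i - 1)).map fun j => (i, j)

/-- The word `𝔣(P)`: list the pairs `(i,j)` with `a (i-1) j = a i (j+1)` in the order of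
`pairsFin` and record the letter `j` for each. -/
noncomputable def fWord (n : ℕ) (a : ℕ → ℕ → ℝ) : List ℕ :=
  ((pairsFin n).filter fun p => a (p.1 - 1) p.2 = a p.1 (p.2 + 1)).map fun p => p.2

/-- The word `𝔦(Q)`: list the pairs `(i,j)` with `b i j = b (i-1) j` in increasing
lexicographic order and record the letter `i - j` for each. -/
noncomputable def iWord (n : ℕ) (b : ℕ → ℕ → ℝ) : List ℕ :=
  ((pairsLex n).filter fun p => b p.1 p.2 = b (p.1 - 1) p.2).map fun p => p.1 - p.2



/-- The sequence `d_t`, `1 ≤ t ≤ i+1`, used to define the crystal operators `e_i, f_i`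
(with the convention `a_{k,k+1} = 0` for `k ∈ {i-1, i}`). -/
noncomputable def dseq (a : ℕ → ℕ → ℝ) (i : ℕ) : ℕ → ℝ
  | 0 => 0
  | 1 => a i 1 - a (i + 1) 1
  | (t + 2) => dseq a i (t + 1) + a i (t + 1) + (if t + 2 = i + 1 then 0 else a i (t + 2))
      - (if t + 1 = i then 0 else a (i - 1) (t + 1)) - a (i + 1) (t + 2)

/-- `d = min {d_1, …, d_{i+1}}`. -/
noncomputable def dmin (a : ℕ → ℕ → ℝ) (i : ℕ) : ℝ :=
  ((Finset.Icc 1 (i + 1)).image (dseq a i)).min'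
    (Finset.Nonempty.image ⟨1, by simp⟩ _)

/-- `m`: the smallest index `t ∈ [1, i+1]` with `d_t = d`. -/
noncomputable def mIdx (a : ℕ → ℕ → ℝ) (i : ℕ) : ℕ :=
  sInf {t | t ∈ Finset.Icc 1 (i + 1) ∧ dseq a i t = dmin a i}

/-- `M`: the largest index `t ∈ [1, i+1]` with `d_t = d`. -/
noncomputable def MIdx (a : ℕ → ℕ → ℝ) (i : ℕ) : ℕ :=
  sSup {t | t ∈ Finset.Icc 1 (i + 1) ∧ dseq a i t = dmin a i}

/-- The raising crystal operator `e_i` (`none` plays the role of `0`). -/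
noncomputable def eOp (i : ℕ) (a : ℕ → ℕ → ℝ) : Option (ℕ → ℕ → ℝ) :=
  if dmin a i = 0 then none
  else some fun i' j' => if i' = i ∧ j' = mIdx a i then a i' j' + 1 else a i' j'

/-- The lowering crystal operator `f_i` (`none` plays the role of `0`). -/
noncomputable def fOp (i : ℕ) (a : ℕ → ℕ → ℝ) : Option (ℕ → ℕ → ℝ) :=
  if MIdx a i = i + 1 then none
  else some fun i' j' => if i' = i ∧ j' = MIdx a i then a i' j' - 1 else a i' j'

/-- `m`-fold iteration of a partial operator. -/
noncomputable def iterOp (op : (ℕ → ℕ → ℝ) → Option (ℕ → ℕ → ℝ)) :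
    ℕ → (ℕ → ℕ → ℝ) → Option (ℕ → ℕ → ℝ)
  | 0 => fun x => some x
  | (m + 1) => fun x => (op x).bind (iterOp op m)

/-- Apply `op i₁ ^ m₁ ∘ ⋯ ∘ op i_k ^ m_k` to `x`, given the list `[(i₁,m₁),…,(i_k,m_k)]`
(the last pair acts first). -/
noncomputable def applyWord (op : ℕ → (ℕ → ℕ → ℝ) → Option (ℕ → ℕ → ℝ)) :
    List (ℕ × ℕ) → (ℕ → ℕ → ℝ) → Option (ℕ → ℕ → ℝ)
  | [] => fun x => some x
  | (p :: rest) => fun x => (applyWord op rest x).bind (iterOp (op p.1) p.2)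

/-- The highest-weight element `G⁰_μ` of `GT_ℤ(μ)`: the element killed by every `e_i`. -/
noncomputable def G0 (n : ℕ) (μ : ℕ → ℤ) : ℕ → ℕ → ℝ :=
  if h : ∃ P, P ∈ GTZ n μ ∧ ∀ i, 1 ≤ i → i ≤ n - 1 → eOp i P = none then h.choose else 0

/-- The lowest-weight element `G*_μ` of `GT_ℤ(μ)`: the element killed by every `f_i`. -/
noncomputable def Gstar (n : ℕ) (μ : ℕ → ℤ) : ℕ → ℕ → ℝ :=
  if h : ∃ P, P ∈ GTZ n μ ∧ ∀ i, 1 ≤ i → i ≤ n - 1 → fOp i P = none then h.choose else 0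

/-- The Demazure crystal `D(μ, w)` computed from the reduced word `l` for `w`:
`{f_{i₁}^{m₁} ⋯ f_{i_k}^{m_k}(G⁰_μ)} ∩ GT_ℤ(μ)`. -/
noncomputable def demCrystal (n : ℕ) (μ : ℕ → ℤ) (l : List ℕ) : Set (ℕ → ℕ → ℝ) :=
  {P | P ∈ GTZ n μ ∧
    ∃ ms : List ℕ, ms.length = l.length ∧ applyWord fOp (l.zip ms) (G0 n μ) = some P}

/-- The opposite Demazure crystal `D(μ, w)^op` computed from the reduced word `l`
for `w·w₀`: `{e_{j₁}^{m₁} ⋯ e_{j_t}^{m_t}(G*_μ)} ∩ GT_ℤ(μ)`. -/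
noncomputable def opDemCrystal (n : ℕ) (μ : ℕ → ℤ) (l : List ℕ) : Set (ℕ → ℕ → ℝ) :=
  {P | P ∈ GTZ n μ ∧
    ∃ ms : List ℕ, ms.length = l.length ∧ applyWord eOp (l.zip ms) (Gstar n μ) = some P}

/-- `σ(F)`: the product of `s_{i-j}` over `(i,j) ∈ F` in increasing lexicographic order. -/
noncomputable def sigmaF (n : ℕ) (F : Finset (ℕ × ℕ)) : Equiv.Perm (Fin n) :=
  wordProd n (((pairsLex n).filter fun p => p ∈ F).map fun p => p.1 - p.2)

/-- `σ̄(F)`: the product of `s_j` over `(i,j) ∈ F` in increasing order for the total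
order in which `(i,j)` precedes `(i',j')` iff `i < i'`, or `i = i'` and `j > j'`. -/
noncomputable def sigmaBarF (n : ℕ) (F : Finset (ℕ × ℕ)) : Equiv.Perm (Fin n) :=
  wordProd n (((pairsBar n).filter fun p => p ∈ F).map fun p => p.2)

/-- The Kogan face `K(μ, F)`: the face of `GT(μ)` cut out by `a i j = a (i-1) j`,
`(i,j) ∈ F`. -/
def KoganFace (n : ℕ) (μ : ℕ → ℤ) (F : Finset (ℕ × ℕ)) : Set (ℕ → ℕ → ℝ) :=
  {a ∈ GTset n μ | ∀ p ∈ F, a p.1 p.2 = a (p.1 - 1) p.2}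

/-- The dual Kogan face `K̄(μ, F)`: the face of `GT(μ)` cut out by
`a (i-1) j = a i (j+1)`, `(i,j) ∈ F`. -/
def dualKoganFace (n : ℕ) (μ : ℕ → ℤ) (F : Finset (ℕ × ℕ)) : Set (ℕ → ℕ → ℝ) :=
  {a ∈ GTset n μ | ∀ p ∈ F, a (p.1 - 1) p.2 = a p.1 (p.2 + 1)}

/-- The BiKogan face `K_{λ,μ}(F, F')` of `GT(λ) × GT(μ)`. -/
def biKoganFace (n : ℕ) (lam μ : ℕ → ℤ) (F F' : Finset (ℕ × ℕ)) :
    Set ((ℕ → ℕ → ℝ) × (ℕ → ℕ → ℝ)) :=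
  {PQ | PQ.1 ∈ GTset n lam ∧ PQ.2 ∈ GTset n μ ∧
    (∀ p ∈ F, PQ.1 (p.1 - 1) p.2 = PQ.1 p.1 (p.2 + 1)) ∧
    (∀ p ∈ F', PQ.2 p.1 p.2 = PQ.2 (p.1 - 1) p.2)}

/-- `ϖ(F, F') = σ̄(F)⁻¹ · σ(F')`. -/
noncomputable def biVarpi (n : ℕ) (F F' : Finset (ℕ × ℕ)) : Equiv.Perm (Fin n) :=
  (sigmaBarF n F)⁻¹ * sigmaF n F'

/-- The BiKogan face `K_{λ,μ}(F, F')` is reduced if `ℓ(ϖ(F,F')) = |F| + |F'|`. -/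
def biKoganReduced (n : ℕ) (F F' : Finset (ℕ × ℕ)) : Prop :=
  len n (biVarpi n F F') = F.card + F'.card


-- ============ auxiliary development ============

abbrev Valid (n : ℕ) (l : List ℕ) : Prop := ∀ j ∈ l, 1 ≤ j ∧ j ≤ n - 1

variable {n : ℕ}

lemma wordProd_nil : wordProd n [] = 1 := rfl

lemma wordProd_cons (j : ℕ) (l : List ℕ) :
    wordProd n (j :: l) = simpleRefl n j * wordProd n l := by
  simp [wordProd]

lemma wordProd_append (l₁ l₂ : List ℕ) :
    wordProd n (l₁ ++ l₂) = wordProd n l₁ * wordProd n l₂ := by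
  simp [wordProd]

lemma wordProd_concat (l : List ℕ) (j : ℕ) :
    wordProd n (l ++ [j]) = wordProd n l * simpleRefl n j := by
  simp [wordProd]

lemma simpleRefl_eq {j : ℕ} (h1 : 1 ≤ j) (h2 : j ≤ n - 1) :
    simpleRefl n j = Equiv.swap ⟨j - 1, by omega⟩ ⟨j, by omega⟩ := by
  rw [simpleRefl, dif_pos ⟨h1, h2⟩]

lemma simpleRefl_mul_self (j : ℕ) : simpleRefl n j * simpleRefl n j = 1 := by
  rw [simpleRefl]; split
  · exact Equiv.swap_mul_self _ _
  · simp

lemma simpleRefl_inv (j : ℕ) : (simpleRefl n j)⁻¹ = simpleRefl n j :=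
  inv_eq_of_mul_eq_one_right (simpleRefl_mul_self j)

lemma wordProd_reverse (l : List ℕ) : wordProd n l.reverse = (wordProd n l)⁻¹ := by
  induction l with
  | nil => simp [wordProd]
  | cons j l ih =>
    rw [List.reverse_cons, wordProd_concat, ih, wordProd_cons, mul_inv_rev, simpleRefl_inv]

lemma valid_sublist {l t : List ℕ} (h : t.Sublist l) (hl : Valid n l) : Valid n t :=
  fun j hj => hl j (h.mem hj)

lemma len_le_of_word {l : List ℕ} (hl : Valid n l) : len n (wordProd n l) ≤ l.length :=
  Nat.sInf_le ⟨l, hl, rfl, rfl⟩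

-- generation: every swap is a product of valid letters
lemma swap_word_aux : ∀ d : ℕ, ∀ a b : Fin n, a.val < b.val → b.val - a.val ≤ d →
    ∃ l, Valid n l ∧ wordProd n l = Equiv.swap a b := by
  intro d
  induction d with
  | zero => intro a b hab hd; omega
  | succ d ih =>
    intro a b hab hd
    by_cases h1 : b.val = a.val + 1
    · refine ⟨[b.val], ?_, ?_⟩
      · intro j hj; simp at hj; subst hj
        constructor <;> omega
      · have hb1 : 1 ≤ b.val := by omega
        have hb2 : b.val ≤ n - 1 := by have := b.isLt; omega
        rw [wordProd_cons, wordProd_nil, mul_one, simpleRefl_eq hb1 hb2]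
        congr 1 <;> apply Fin.ext <;> simp <;> omega
    · -- b.val ≥ a.val + 2
      have hb : (2 : ℕ) ≤ b.val := by omega
      set c : Fin n := ⟨b.val - 1, by omega⟩ with hc
      have hac : a.val < c.val := by simp [hc]; omega
      have hcb : c.val < b.val := by simp [hc]; omega
      obtain ⟨l1, hl1, hp1⟩ := ih c b hcb (by simp [hc]; omega)
      obtain ⟨l2, hl2, hp2⟩ := ih a c hac (by simp [hc]; omega)
      refine ⟨l1 ++ l2 ++ l1, ?_, ?_⟩
      · intro j hj
        rcases List.mem_append.mp hj with hj' | hj'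
        · rcases List.mem_append.mp hj' with hj'' | hj''
          exacts [hl1 j hj'', hl2 j hj'']
        · exact hl1 j hj'
      · rw [wordProd_append, wordProd_append, hp1, hp2]
        have hne1 : a ≠ c := Fin.ne_of_lt (by exact hac)
        have hne2 : a ≠ b := Fin.ne_of_lt (by exact hab)
        have h5 : Equiv.swap a b = Equiv.swap (Equiv.swap c b a) (Equiv.swap c b c) := by
          rw [Equiv.swap_apply_of_ne_of_ne hne1 hne2, Equiv.swap_apply_left]
        rw [h5, Equiv.swap_apply_apply, Equiv.swap_inv, mul_assoc]

lemma exists_word (w : Equiv.Perm (Fin n)) : ∃ l, Valid n l ∧ wordProd n l = w := by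
  refine Equiv.Perm.swap_induction_on w ⟨[], by simp [Valid], rfl⟩ ?_
  intro f x y hxy ih
  obtain ⟨l1, hl1, hp1⟩ := ih
  have key : ∃ l2, Valid n l2 ∧ wordProd n l2 = Equiv.swap x y := by
    rcases lt_or_gt_of_ne hxy with h | h
    · exact swap_word_aux (y.val - x.val) x y h le_rfl
    · obtain ⟨l2, hl2, hp2⟩ := swap_word_aux (x.val - y.val) y x h le_rfl
      exact ⟨l2, hl2, by rw [hp2, Equiv.swap_comm]⟩
  obtain ⟨l2, hl2, hp2⟩ := key
  refine ⟨l2 ++ l1, ?_, by rw [wordProd_append, hp1, hp2]⟩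
  intro j hj
  rcases List.mem_append.mp hj with h' | h'
  exacts [hl2 j h', hl1 j h']

lemma exists_min_word (w : Equiv.Perm (Fin n)) :
    ∃ l, Valid n l ∧ l.length = len n w ∧ wordProd n l = w := by
  have hne : {k | ∃ l : List ℕ, Valid n l ∧ l.length = k ∧ wordProd n l = w}.Nonempty := by
    obtain ⟨l, hl, hp⟩ := exists_word w
    exact ⟨l.length, l, hl, rfl, hp⟩
  exact Nat.sInf_mem hne

lemma exists_reduced_word (w : Equiv.Perm (Fin n)) :
    ∃ l, IsReduced n l ∧ wordProd n l = w := by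
  obtain ⟨l, hl, hlen, hp⟩ := exists_min_word w
  exact ⟨l, ⟨hl, by rw [hp, hlen]⟩, hp⟩

lemma len_one : len n (1 : Equiv.Perm (Fin n)) = 0 :=
  Nat.le_zero.mp (len_le_of_word (l := []) (by intro j hj; simp at hj))

lemma eq_one_of_len_zero {w : Equiv.Perm (Fin n)} (h : len n w = 0) : w = 1 := by
  obtain ⟨l, _, hlen, hp⟩ := exists_min_word w
  rw [h, List.length_eq_zero_iff] at hlen
  rw [← hp, hlen, wordProd_nil]

lemma len_mul_le (x y : Equiv.Perm (Fin n)) : len n (x * y) ≤ len n x + len n y := by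
  obtain ⟨l1, h1, hl1, hp1⟩ := exists_min_word x
  obtain ⟨l2, h2, hl2, hp2⟩ := exists_min_word y
  calc len n (x * y) = len n (wordProd n (l1 ++ l2)) := by rw [wordProd_append, hp1, hp2]
  _ ≤ (l1 ++ l2).length := len_le_of_word (fun j hj => by
      rcases List.mem_append.mp hj with h | h; exacts [h1 j h, h2 j h])
  _ = len n x + len n y := by simp [hl1, hl2]

lemma len_inv_le (w : Equiv.Perm (Fin n)) : len n w⁻¹ ≤ len n w := by
  obtain ⟨l, hl, hlen, hp⟩ := exists_min_word w
  calc len n w⁻¹ = len n (wordProd n l.reverse) := by rw [wordProd_reverse, hp]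
  _ ≤ l.reverse.length := len_le_of_word (fun j hj => hl j (List.mem_reverse.mp hj))
  _ = len n w := by simp [hlen]

lemma len_inv (w : Equiv.Perm (Fin n)) : len n w⁻¹ = len n w :=
  le_antisymm (len_inv_le w) (by simpa using len_inv_le w⁻¹)

lemma sign_wordProd {l : List ℕ} (hl : Valid n l) :
    Equiv.Perm.sign (wordProd n l) = (-1) ^ l.length := by
  induction l with
  | nil => simp [wordProd]
  | cons j l ih =>
    obtain ⟨h1, h2⟩ := hl j (by simp)
    rw [wordProd_cons, map_mul, ih (fun j hj => hl j (by simp [hj])),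
      simpleRefl_eq h1 h2, Equiv.Perm.sign_swap (by simp only [ne_eq, Fin.ext_iff]; omega)]
    simp [pow_succ, mul_comm]

lemma sign_len (w : Equiv.Perm (Fin n)) :
    Equiv.Perm.sign w = (-1) ^ len n w := by
  obtain ⟨l, hl, hlen, hp⟩ := exists_min_word w
  rw [← hp, sign_wordProd hl]
  rw [hp, hlen]

lemma len_simpleRefl_le {j : ℕ} (h1 : 1 ≤ j) (h2 : j ≤ n - 1) :
    len n (simpleRefl n j) ≤ 1 := by
  have h : simpleRefl n j = wordProd n [j] := by rw [wordProd_cons, wordProd_nil, mul_one]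
  rw [h]
  have := len_le_of_word (n := n) (l := [j])
    (fun i hi => by simp at hi; subst hi; exact ⟨h1, h2⟩)
  simpa using this

lemma len_dichot {j : ℕ} (h1 : 1 ≤ j) (h2 : j ≤ n - 1) (w : Equiv.Perm (Fin n)) :
    len n (w * simpleRefl n j) = len n w + 1 ∨ len n (w * simpleRefl n j) + 1 = len n w := by
  have hs : len n (simpleRefl n j) ≤ 1 := len_simpleRefl_le h1 h2
  have hub : len n (w * simpleRefl n j) ≤ len n w + 1 := by
    have := len_mul_le w (simpleRefl n j)
    omega
  have hlb : len n w ≤ len n (w * simpleRefl n j) + 1 := by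
    have heq : len n w = len n ((w * simpleRefl n j) * simpleRefl n j) := by
      rw [mul_assoc, simpleRefl_mul_self, mul_one]
    have := len_mul_le (w * simpleRefl n j) (simpleRefl n j)
    omega
  have hne : len n (w * simpleRefl n j) ≠ len n w := by
    intro heq
    have e1 := sign_len w
    have e2 := sign_len (w * simpleRefl n j)
    rw [heq, map_mul, e1, simpleRefl_eq h1 h2,
      Equiv.Perm.sign_swap (by simp only [ne_eq, Fin.ext_iff]; omega)] at e2
    have e3 : ((-1 : ℤˣ)) ^ len n w * (-1) = (-1) ^ len n w * 1 := by
      rw [mul_one]; exact e2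
    have h3 : ((-1 : ℤˣ)) = 1 := mul_left_cancel e3
    exact absurd h3 (by decide)
  omega

set_option maxHeartbeats 2000000 in
lemma exchange_aux (a b : Fin n) (hab : a < b) :
    ∀ l : List ℕ, Valid n l → (wordProd n l)⁻¹ b < (wordProd n l)⁻¹ a →
    ∃ k, k < l.length ∧ Equiv.swap a b * wordProd n l = wordProd n (l.eraseIdx k) := by
  intro l
  induction l using List.reverseRecOn with
  | nil =>
    intro _ h
    simp [wordProd_nil] at h
    exact absurd hab (not_lt.mpr h.le)
  | append_singleton l j ih =>
    intro hval h
    have hlval : Valid n l := fun i hi => hval i (by simp [hi])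
    obtain ⟨hj1, hj2⟩ := hval j (by simp)
    have hw : wordProd n (l ++ [j]) = wordProd n l * simpleRefl n j := wordProd_concat l j
    set p : Fin n := ⟨j - 1, by omega⟩ with hp
    set q : Fin n := ⟨j, by omega⟩ with hq
    have hs : simpleRefl n j = Equiv.swap p q := simpleRefl_eq hj1 hj2
    have hinv : (wordProd n (l ++ [j]))⁻¹ = Equiv.swap p q * (wordProd n l)⁻¹ := by
      rw [hw, hs, mul_inv_rev, Equiv.swap_inv]
    rw [hinv] at h
    simp only [Equiv.Perm.mul_apply] at h
    by_cases hBA : (wordProd n l)⁻¹ b < (wordProd n l)⁻¹ a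
    · obtain ⟨k, hk, hke⟩ := ih hlval hBA
      refine ⟨k, by simp; omega, ?_⟩
      rw [hw, List.eraseIdx_append_of_lt_length hk, wordProd_concat, ← hke, mul_assoc]
    · -- crossing case : (wordProd n l)⁻¹ a = p, (wordProd n l)⁻¹ b = q
      have hab' : a ≠ b := Fin.ne_of_lt hab
      set A := (wordProd n l)⁻¹ a with hA
      set B := (wordProd n l)⁻¹ b with hB
      have hABne : A ≠ B := fun h' => hab' ((wordProd n l)⁻¹.injective h')
      have hAB : A < B := lt_of_le_of_ne (not_lt.mp hBA) hABne
      have hpqv : p.val = j - 1 ∧ q.val = j := ⟨rfl, rfl⟩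
      have hApq : A = p ∧ B = q := by
        by_cases hap : A = p
        · by_cases hbq : B = q
          · exact ⟨hap, hbq⟩
          · exfalso
            have hbp : B ≠ p := fun h' => hABne (hap.trans h'.symm)
            rw [hap, Equiv.swap_apply_left, Equiv.swap_apply_of_ne_of_ne hbp hbq] at h
            rw [hap] at hAB
            simp only [Fin.lt_def] at h hAB
            omega
        · by_cases haq : A = q
          · exfalso
            have hbq : B ≠ q := fun h' => hABne (haq.trans h'.symm)
            have hbp : B ≠ p := by
              intro h'
              rw [haq, h'] at hAB
              simp only [Fin.lt_def] at hAB
              omega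
            rw [haq, Equiv.swap_apply_right, Equiv.swap_apply_of_ne_of_ne hbp hbq] at h
            rw [haq] at hAB
            simp only [Fin.lt_def] at h hAB
            omega
          · exfalso
            rw [Equiv.swap_apply_of_ne_of_ne hap haq] at h
            by_cases hbp : B = p
            · rw [hbp] at hAB
              rw [hbp, Equiv.swap_apply_left] at h
              simp only [Fin.lt_def] at h hAB
              omega
            · by_cases hbq : B = q
              · rw [hbq, Equiv.swap_apply_right] at h
                rw [hbq] at hAB
                simp only [Fin.lt_def] at h hAB
                omega
              · rw [Equiv.swap_apply_of_ne_of_ne hbp hbq] at h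
                exact absurd hAB (not_lt.mpr h.le)
      obtain ⟨hap, hbq⟩ := hApq
      have hva : wordProd n l p = a := by rw [← hap, hA]; simp
      have hvb : wordProd n l q = b := by rw [← hbq, hB]; simp
      have key : Equiv.swap a b * wordProd n l = wordProd n l * Equiv.swap p q := by
        rw [← hva, ← hvb, ← Equiv.mul_swap_eq_swap_mul]
      refine ⟨l.length, by simp, ?_⟩
      have herase : (l ++ [j]).eraseIdx l.length = l := by
        rw [List.eraseIdx_append_of_length_le le_rfl]
        simp
      rw [herase, hw, hs, ← mul_assoc, key, mul_assoc, Equiv.swap_mul_self, mul_one]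

lemma descent_of_len_lt {a b : Fin n} (hab : a < b) {w : Equiv.Perm (Fin n)}
    (h : len n (Equiv.swap a b * w) < len n w) : w⁻¹ b < w⁻¹ a := by
  by_contra hc
  have hab' : a ≠ b := Fin.ne_of_lt hab
  have hABne : w⁻¹ a ≠ w⁻¹ b := fun h' => hab' (w⁻¹.injective h')
  have hAB : w⁻¹ a < w⁻¹ b := lt_of_le_of_ne (not_lt.mp hc) hABne
  obtain ⟨l, hl, hlen, hp⟩ := exists_min_word (Equiv.swap a b * w)
  have hx1 : (Equiv.swap a b * w)⁻¹ b = w⁻¹ a := by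
    simp [Equiv.swap_apply_right]
  have hx2 : (Equiv.swap a b * w)⁻¹ a = w⁻¹ b := by
    simp [Equiv.swap_apply_left]
  have hyp : (wordProd n l)⁻¹ b < (wordProd n l)⁻¹ a := by
    rw [hp, hx1, hx2]; exact hAB
  obtain ⟨k, hk, hke⟩ := exchange_aux a b hab l hl hyp
  have hww : Equiv.swap a b * (Equiv.swap a b * w) = w := by
    rw [← mul_assoc, Equiv.swap_mul_self, one_mul]
  rw [hp, hww] at hke
  have hle : len n w ≤ (l.eraseIdx k).length :=
    hke ▸ len_le_of_word (valid_sublist (List.eraseIdx_sublist l k) hl)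
  rw [List.length_eraseIdx_of_lt hk] at hle
  omega

lemma exchange {l : List ℕ} (hl : Valid n l) {a b : Fin n} (hab : a ≠ b)
    (h : len n (Equiv.swap a b * wordProd n l) < len n (wordProd n l)) :
    ∃ k, k < l.length ∧ Equiv.swap a b * wordProd n l = wordProd n (l.eraseIdx k) := by
  rcases lt_or_gt_of_ne hab with hlt | hlt
  · exact exchange_aux a b hlt l hl (descent_of_len_lt hlt h)
  · rw [Equiv.swap_comm] at h ⊢
    exact exchange_aux b a hlt l hl (descent_of_len_lt hlt h)

lemma exists_reduced_sublist : ∀ l : List ℕ, Valid n l →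
    ∃ t, t.Sublist l ∧ IsReduced n t ∧ wordProd n t = wordProd n l := by
  intro l
  induction l using List.reverseRecOn with
  | nil => exact fun _ => ⟨[], List.Sublist.refl _, ⟨by intro j hj; simp at hj,
      by rw [wordProd_nil, len_one]; rfl⟩, rfl⟩
  | append_singleton l j ih =>
    intro hval
    have hlval : Valid n l := fun i hi => hval i (by simp [hi])
    obtain ⟨hj1, hj2⟩ := hval j (by simp)
    obtain ⟨t, hts, ⟨htv, htr⟩, htp⟩ := ih hlval
    rcases len_dichot hj1 hj2 (wordProd n t) with hup | hdown
    · refine ⟨t ++ [j], hts.append (List.Sublist.refl _), ⟨?_, ?_⟩, ?_⟩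
      · intro i hi
        rcases List.mem_append.mp hi with h' | h'
        · exact htv i h'
        · simp at h'; subst h'; exact ⟨hj1, hj2⟩
      · rw [wordProd_concat, hup, htr]
        simp
      · rw [wordProd_concat, wordProd_concat, htp]
    · set p : Fin n := ⟨j - 1, by omega⟩ with hp
      set q : Fin n := ⟨j, by omega⟩ with hq
      have hs : simpleRefl n j = Equiv.swap p q := simpleRefl_eq hj1 hj2
      have hpq : wordProd n t p ≠ wordProd n t q := by
        apply (wordProd n t).injective.ne
        simp only [ne_eq, Fin.ext_iff, hp, hq]
        omega
      have hconj : wordProd n t * simpleRefl n j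
          = Equiv.swap (wordProd n t p) (wordProd n t q) * wordProd n t := by
        rw [hs, Equiv.mul_swap_eq_swap_mul]
      have hlen2 : len n (Equiv.swap (wordProd n t p) (wordProd n t q) * wordProd n t)
          < len n (wordProd n t) := by
        rw [← hconj]; omega
      obtain ⟨k, hk, hke⟩ := exchange htv hpq hlen2
      have e : wordProd n (t.eraseIdx k) = wordProd n t * simpleRefl n j := by
        rw [← hke, hconj]
      refine ⟨t.eraseIdx k, (List.eraseIdx_sublist t k).trans
        (hts.trans (by simp)), ⟨?_, ?_⟩, ?_⟩
      · exact valid_sublist (List.eraseIdx_sublist t k) htv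
      · rw [e, List.length_eraseIdx_of_lt hk]
        omega
      · rw [e, wordProd_concat, htp]

def cstep (n : ℕ) (x y : Equiv.Perm (Fin n)) : Prop :=
  (∃ a b : Fin n, a ≠ b ∧ y = x * Equiv.swap a b) ∧ len n x < len n y

def cle (n : ℕ) : Equiv.Perm (Fin n) → Equiv.Perm (Fin n) → Prop :=
  Relation.ReflTransGen (cstep n)

lemma sublist_concat_cases {t l : List ℕ} {j : ℕ} (h : t.Sublist (l ++ [j])) :
    t.Sublist l ∨ ∃ t₁, t = t₁ ++ [j] ∧ t₁.Sublist l := by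
  have h' := List.reverse_sublist.mpr h
  rw [List.reverse_append] at h'
  simp at h'
  rcases List.sublist_cons_iff.mp h' with h1 | ⟨t1, ht, h2⟩
  · left; simpa using List.reverse_sublist.mpr h1
  · right
    refine ⟨t1.reverse, ?_, by simpa using List.reverse_sublist.mpr h2⟩
    have h3 : t.reverse.reverse = (j :: t1).reverse := by rw [ht]
    simpa using h3

lemma reduced_concat_left {l : List ℕ} {j : ℕ} (h : IsReduced n (l ++ [j])) :
    IsReduced n l := by
  obtain ⟨hv, hr⟩ := h
  have hlv : Valid n l := fun i hi => hv i (by simp [hi])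
  obtain ⟨hj1, hj2⟩ := hv j (by simp)
  refine ⟨hlv, ?_⟩
  have h1 : len n (wordProd n l) ≤ l.length := len_le_of_word hlv
  have h2 : len n (wordProd n (l ++ [j])) ≤ len n (wordProd n l) + 1 := by
    rw [wordProd_concat]
    have := len_mul_le (wordProd n l) (simpleRefl n j)
    have := len_simpleRefl_le hj1 hj2
    omega
  rw [hr] at h2
  simp at h2
  omega

lemma subword_of_cle : ∀ N : ℕ, ∀ w : Equiv.Perm (Fin n), len n w ≤ N →
    ∀ l, IsReduced n l → wordProd n l = w → ∀ u, cle n u w →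
    ∃ t, t.Sublist l ∧ IsReduced n t ∧ wordProd n t = u := by
  intro N
  induction N with
  | zero =>
    intro w hw l hl hp u hu
    rcases Relation.ReflTransGen.cases_tail hu with h | ⟨z, _, hstep⟩
    · exact h ▸ ⟨l, List.Sublist.refl _, hl, hp⟩
    · exact absurd hstep.2 (by omega)
  | succ N ih =>
    intro w hw l hl hp u hu
    rcases Relation.ReflTransGen.cases_tail hu with h | ⟨z, hz, hstep⟩
    · exact h ▸ ⟨l, List.Sublist.refl _, hl, hp⟩
    · obtain ⟨⟨a, b, hab, hyz⟩, hlz⟩ := hstep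
      have habw : w a ≠ w b := w.injective.ne hab
      have hzw : z = Equiv.swap (w a) (w b) * w := by
        rw [← Equiv.mul_swap_eq_swap_mul, hyz, mul_assoc, Equiv.swap_mul_self, mul_one]
      have hlen : len n (Equiv.swap (w a) (w b) * wordProd n l) < len n (wordProd n l) := by
        rw [hp, ← hzw]; exact hlz
      obtain ⟨k, hk, hke⟩ := exchange hl.1 habw hlen
      obtain ⟨ρ, hρs, hρr, hρp⟩ := exists_reduced_sublist (l.eraseIdx k)
        (valid_sublist (List.eraseIdx_sublist l k) hl.1)
      have hρz : wordProd n ρ = z := by rw [hρp, ← hke, hp, ← hzw]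
      obtain ⟨t, hts, htr, htp⟩ := ih z (by omega) ρ hρr hρz u hz
      exact ⟨t, hts.trans (hρs.trans (List.eraseIdx_sublist l k)), htr, htp⟩

noncomputable def mup (n : ℕ) (y : Equiv.Perm (Fin n)) (j : ℕ) : Equiv.Perm (Fin n) :=
  if len n y < len n (y * simpleRefl n j) then y * simpleRefl n j else y

lemma mup_of_up {y : Equiv.Perm (Fin n)} {j : ℕ}
    (h : len n y < len n (y * simpleRefl n j)) : mup n y j = y * simpleRefl n j := if_pos h

lemma mup_of_down {y : Equiv.Perm (Fin n)} {j : ℕ}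
    (h : ¬ len n y < len n (y * simpleRefl n j)) : mup n y j = y := if_neg h

lemma cstep_simpleRefl {y : Equiv.Perm (Fin n)} {j : ℕ} (hj1 : 1 ≤ j) (hj2 : j ≤ n - 1)
    (h : len n y < len n (y * simpleRefl n j)) : cstep n y (y * simpleRefl n j) := by
  refine ⟨⟨⟨j - 1, by omega⟩, ⟨j, by omega⟩, by simp [Fin.ext_iff]; omega, ?_⟩, h⟩
  rw [← simpleRefl_eq hj1 hj2]

lemma grand : ∀ N : ℕ,
    (∀ l, IsReduced n l → l.length ≤ N → ∀ t, t.Sublist l → IsReduced n t →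
      cle n (wordProd n t) (wordProd n l)) ∧
    (∀ y : Equiv.Perm (Fin n), len n y ≤ N → ∀ x, cle n x y → ∀ j, 1 ≤ j → j ≤ n - 1 →
      len n x < len n (x * simpleRefl n j) → cle n (x * simpleRefl n j) (mup n y j)) := by
  intro N
  induction N with
  | zero =>
    constructor
    · intro l hl hlen t ht htred
      have hnil : l = [] := List.length_eq_zero_iff.mp (by omega)
      subst hnil
      rw [List.sublist_nil.mp ht]
      exact Relation.ReflTransGen.refl
    · intro y hy x hxy j hj1 hj2 hup
      have hxyeq : x = y := by
        rcases Relation.ReflTransGen.cases_tail hxy with h | ⟨z, _, hstep⟩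
        · exact h.symm
        · exact absurd hstep.2 (by omega)
      subst hxyeq
      rw [mup_of_up (by omega)]
      exact Relation.ReflTransGen.refl
  | succ N ih =>
    obtain ⟨ihA, ihB⟩ := ih
    have hA : ∀ l, IsReduced n l → l.length ≤ N + 1 → ∀ t, t.Sublist l → IsReduced n t →
        cle n (wordProd n t) (wordProd n l) := by
      intro l hl hlen t ht htred
      rcases List.eq_nil_or_concat' l with rfl | ⟨l₁, j, rfl⟩
      · rw [List.sublist_nil.mp ht]
        exact Relation.ReflTransGen.refl
      · have hl₁ : IsReduced n l₁ := reduced_concat_left hl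
        obtain ⟨hj1, hj2⟩ := hl.1 j (by simp)
        have hlen₁ : l₁.length ≤ N := by simp at hlen; omega
        have hlstep : cstep n (wordProd n l₁) (wordProd n (l₁ ++ [j])) := by
          have h1 : len n (wordProd n l₁) = l₁.length := hl₁.2
          have h2 : len n (wordProd n (l₁ ++ [j])) = l₁.length + 1 := by
            rw [hl.2]; simp
          rw [wordProd_concat]
          refine cstep_simpleRefl hj1 hj2 ?_
          rw [← wordProd_concat, h1, h2]; omega
        rcases sublist_concat_cases ht with ht₁ | ⟨t₁, rfl, ht₁⟩
        · exact (ihA l₁ hl₁ hlen₁ t ht₁ htred).tail hlstep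
        · have ht₁r : IsReduced n t₁ := reduced_concat_left htred
          have h1 := ihA l₁ hl₁ hlen₁ t₁ ht₁ ht₁r
          have hup : len n (wordProd n t₁) < len n (wordProd n t₁ * simpleRefl n j) := by
            rw [← wordProd_concat, ht₁r.2, htred.2]
            simp
          have h2 := ihB (wordProd n l₁) (by rw [hl₁.2]; omega) (wordProd n t₁) h1 j hj1 hj2 hup
          have hmup : mup n (wordProd n l₁) j = wordProd n (l₁ ++ [j]) := by
            rw [wordProd_concat]
            apply mup_of_up
            rw [← wordProd_concat, hl₁.2, hl.2]
            simp
          rw [hmup, ← wordProd_concat] at h2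
          exact h2
    refine ⟨hA, ?_⟩
    intro y hy x hxy j hj1 hj2 hup
    rcases Relation.ReflTransGen.cases_tail hxy with h | ⟨z, hxz, hstep⟩
    · subst h
      rw [mup_of_up (by omega)]
      exact Relation.ReflTransGen.refl
    · obtain ⟨⟨a, b, hab, hyz⟩, hlz⟩ := hstep
      have h1 : cle n (x * simpleRefl n j) (mup n z j) :=
        ihB z (by omega) x hxz j hj1 hj2 hup
      have hstep' : cstep n z y := ⟨⟨a, b, hab, hyz⟩, hlz⟩
      by_cases hzj : len n z < len n (z * simpleRefl n j) <;>
        by_cases hyj : len n y < len n (y * simpleRefl n j)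
      · -- up, up : single conjugated step
        rw [mup_of_up hzj] at h1
        rw [mup_of_up hyj]
        refine h1.tail ⟨⟨simpleRefl n j a, simpleRefl n j b, (simpleRefl n j).injective.ne hab, ?_⟩, ?_⟩
        · rw [Equiv.swap_apply_apply, simpleRefl_inv, hyz]
          calc z * Equiv.swap a b * simpleRefl n j
              = z * (simpleRefl n j * simpleRefl n j) * Equiv.swap a b * simpleRefl n j := by
                rw [simpleRefl_mul_self, mul_one]
          _ = z * simpleRefl n j * (simpleRefl n j * Equiv.swap a b * simpleRefl n j) := by
                simp only [mul_assoc]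
        · have hd := len_dichot hj1 hj2 z
          have : len n (z * simpleRefl n j) = len n z + 1 := by omega
          omega
      · -- z up, y down : the hard case
        rw [mup_of_up hzj] at h1
        rw [mup_of_down hyj]
        refine h1.trans ?_
        have hyd : len n (y * simpleRefl n j) + 1 = len n y := by
          have := len_dichot hj1 hj2 y
          omega
        obtain ⟨ρ, hρr, hρp⟩ := exists_reduced_word (y * simpleRefl n j)
        have hρv : Valid n (ρ ++ [j]) := by
          intro i hi
          rcases List.mem_append.mp hi with h' | h'
          · exact hρr.1 i h'
          · simp at h'; subst h'; exact ⟨hj1, hj2⟩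
        have hρy : wordProd n (ρ ++ [j]) = y := by
          rw [wordProd_concat, hρp, mul_assoc, simpleRefl_mul_self, mul_one]
        have hρred : IsReduced n (ρ ++ [j]) := by
          refine ⟨hρv, ?_⟩
          rw [hρy]
          simp [← hyd, ← hρr.2, hρp]
        have hzy : cle n z y := Relation.ReflTransGen.single hstep'
        obtain ⟨t, hts, htr, htp⟩ := subword_of_cle (len n y) y le_rfl (ρ ++ [j]) hρred hρy z hzy
        rcases sublist_concat_cases hts with ht₁ | ⟨t₁, rfl, ht₁⟩
        · -- t ⊆ ρ : extend by j
          have htj : IsReduced n (t ++ [j]) := by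
            refine ⟨?_, ?_⟩
            · intro i hi
              rcases List.mem_append.mp hi with h' | h'
              · exact htr.1 i h'
              · simp at h'; subst h'; exact ⟨hj1, hj2⟩
            · rw [wordProd_concat, htp]
              have hd := len_dichot hj1 hj2 z
              have : len n (z * simpleRefl n j) = len n z + 1 := by omega
              have hzt : len n z = t.length := by rw [← htp]; exact htr.2
              rw [this, hzt]
              simp
          have := hA (ρ ++ [j]) hρred (by
            have : (ρ ++ [j]).length = len n y := by
              have := hρred.2
              rw [hρy] at this
              omega
            omega) (t ++ [j]) (ht₁.append (List.Sublist.refl _)) htj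
          rw [hρy, wordProd_concat, htp] at this
          exact this
        · -- t = t₁ ++ [j] : contradiction with z up
          exfalso
          have : wordProd n t₁ = z * simpleRefl n j := by
            have := htp
            rw [wordProd_concat] at this
            rw [← this, mul_assoc, simpleRefl_mul_self, mul_one]
          have hlt : len n (z * simpleRefl n j) ≤ t₁.length := by
            rw [← this]
            exact len_le_of_word (fun i hi => htr.1 i (by simp [hi]))
          have ht₁len : (t₁ ++ [j]).length = len n z := htr.2 ▸ by rw [htp]
          simp at ht₁len
          omega
      · -- z down, y up
        rw [mup_of_down hzj] at h1
        rw [mup_of_up hyj]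
        exact (h1.tail hstep').tail (cstep_simpleRefl hj1 hj2 hyj)
      · -- down, down
        rw [mup_of_down hzj] at h1
        rw [mup_of_down hyj]
        exact h1.tail hstep'


lemma cle_of_subword {l t : List ℕ} (hl : IsReduced n l) (ht : t.Sublist l)
    (htr : IsReduced n t) : cle n (wordProd n t) (wordProd n l) :=
  (grand l.length).1 l hl le_rfl t ht htr

lemma cle_of_bruhatLE {u w : Equiv.Perm (Fin n)} (h : bruhatLE n u w) : cle n u w := by
  obtain ⟨l, l', hred, hw, hsub, hred', hu⟩ := h
  rw [← hw, ← hu]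
  exact cle_of_subword hred hsub hred'

lemma bruhatLE_of_cle {u w : Equiv.Perm (Fin n)} (h : cle n u w) : bruhatLE n u w := by
  obtain ⟨l, hl, hp⟩ := exists_reduced_word w
  obtain ⟨t, hts, htr, htp⟩ := subword_of_cle (len n w) w le_rfl l hl hp u h
  exact ⟨l, t, hl, hp, hts, htr, htp⟩

lemma cle_inv {u w : Equiv.Perm (Fin n)} (h : cle n u w) : cle n u⁻¹ w⁻¹ := by
  induction h with
  | refl => exact Relation.ReflTransGen.refl
  | @tail z y hxz hstep ih =>
    obtain ⟨⟨a, b, hab, hyz⟩, hlen⟩ := hstep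
    refine ih.tail ⟨⟨z a, z b, z.injective.ne hab, ?_⟩, ?_⟩
    · rw [hyz, mul_inv_rev, Equiv.swap_inv, Equiv.mul_swap_eq_swap_mul]
      simp
    · rw [len_inv, len_inv]
      exact hlen

noncomputable def dstep (n : ℕ) (v : Equiv.Perm (Fin n)) (j : ℕ) : Equiv.Perm (Fin n) :=
  if len n (v * simpleRefl n j) < len n v then v * simpleRefl n j else v

noncomputable def rfold (n : ℕ) (v : Equiv.Perm (Fin n)) (β : List ℕ) : Equiv.Perm (Fin n) :=
  β.foldl (dstep n) v

lemma dstep_cle {j : ℕ} (hj1 : 1 ≤ j) (hj2 : j ≤ n - 1) (v : Equiv.Perm (Fin n)) :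
    cle n (dstep n v j) v := by
  rw [dstep]
  split_ifs with h
  · refine Relation.ReflTransGen.single ⟨⟨⟨j - 1, by omega⟩, ⟨j, by omega⟩, ?_, ?_⟩, h⟩
    · simp [Fin.ext_iff]; omega
    · rw [← simpleRefl_eq hj1 hj2, mul_assoc, simpleRefl_mul_self, mul_one]
  · exact Relation.ReflTransGen.refl

lemma reduced_word_concat_simple {y : Equiv.Perm (Fin n)} {j : ℕ} (hj1 : 1 ≤ j)
    (hj2 : j ≤ n - 1) (hy : len n (y * simpleRefl n j) < len n y) :
    ∃ ρ, IsReduced n (ρ ++ [j]) ∧ wordProd n (ρ ++ [j]) = y ∧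
      wordProd n ρ = y * simpleRefl n j ∧ (ρ ++ [j]).length = len n y := by
  have hyd : len n (y * simpleRefl n j) + 1 = len n y := by
    have := len_dichot hj1 hj2 y
    omega
  obtain ⟨ρ, hρr, hρp⟩ := exists_reduced_word (y * simpleRefl n j)
  have hρy : wordProd n (ρ ++ [j]) = y := by
    rw [wordProd_concat, hρp, mul_assoc, simpleRefl_mul_self, mul_one]
  have hρv : Valid n (ρ ++ [j]) := by
    intro i hi
    rcases List.mem_append.mp hi with h' | h'
    · exact hρr.1 i h'
    · simp at h'; subst h'; exact ⟨hj1, hj2⟩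
  have hρlen : (ρ ++ [j]).length = len n y := by
    have := hρr.2
    rw [hρp] at this
    simp
    omega
  exact ⟨ρ, ⟨hρv, by rw [hρy, hρlen]⟩, hρy, hρp, hρlen⟩

lemma dlift {u y : Equiv.Perm (Fin n)} {j : ℕ} (hj1 : 1 ≤ j) (hj2 : j ≤ n - 1)
    (h : cle n u y) (hy : len n (y * simpleRefl n j) < len n y) :
    cle n (dstep n u j) (y * simpleRefl n j) := by
  obtain ⟨ρ, hρred, hρy, hρp, _⟩ := reduced_word_concat_simple hj1 hj2 hy
  obtain ⟨t, hts, htr, htp⟩ := subword_of_cle (len n y) y le_rfl (ρ ++ [j]) hρred hρy u h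
  rcases sublist_concat_cases hts with ht₁ | ⟨t₁, rfl, ht₁⟩
  · have hcle := cle_of_subword (reduced_concat_left hρred) ht₁ htr
    rw [htp, hρp] at hcle
    exact (dstep_cle hj1 hj2 u).trans hcle
  · have ht₁r : IsReduced n t₁ := reduced_concat_left htr
    have husj : u * simpleRefl n j = wordProd n t₁ := by
      rw [← htp, wordProd_concat, mul_assoc, simpleRefl_mul_self, mul_one]
    have hdown : len n (u * simpleRefl n j) < len n u := by
      have h1 : len n (u * simpleRefl n j) ≤ t₁.length := by
        rw [husj]; exact len_le_of_word ht₁r.1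
      have h2 : len n u = t₁.length + 1 := by
        have := htr.2
        rw [htp] at this
        simp at this
        omega
      omega
    rw [dstep, if_pos hdown]
    have hcle := cle_of_subword (reduced_concat_left hρred) ht₁ ht₁r
    rw [hρp, ← husj] at hcle
    exact hcle

lemma rfold_min : ∀ β : List ℕ, Valid n β → ∀ u c : Equiv.Perm (Fin n), cle n u c →
    ∀ t, t.Sublist β → cle n (rfold n u β) (c * wordProd n t) := by
  intro β
  induction β with
  | nil =>
    intro _ u c h t ht
    rw [List.sublist_nil.mp ht, wordProd_nil, mul_one]
    exact h
  | cons j β₁ ih =>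
    intro hv u c h t ht
    obtain ⟨hj1, hj2⟩ := hv j (by simp)
    have hv₁ : Valid n β₁ := fun i hi => hv i (by simp [hi])
    have hrf : rfold n u (j :: β₁) = rfold n (dstep n u j) β₁ := rfl
    rcases List.sublist_cons_iff.mp ht with ht₁ | ⟨t₁, rfl, ht₁⟩
    · rw [hrf]
      exact ih hv₁ (dstep n u j) c ((dstep_cle hj1 hj2 u).trans h) t ht₁
    · rw [hrf, wordProd_cons, ← mul_assoc]
      refine ih hv₁ (dstep n u j) (c * simpleRefl n j) ?_ t₁ ht₁
      by_cases hcj : len n (c * simpleRefl n j) < len n c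
      · exact dlift hj1 hj2 h hcj
      · have hup : len n c < len n (c * simpleRefl n j) := by
          have := len_dichot hj1 hj2 c
          omega
        exact ((dstep_cle hj1 hj2 u).trans h).tail (cstep_simpleRefl hj1 hj2 hup)

lemma rfold_mem : ∀ β : List ℕ, Valid n β → ∀ v : Equiv.Perm (Fin n),
    ∃ t, t.Sublist β ∧ rfold n v β = v * wordProd n t ∧
      len n (rfold n v β) + t.length = len n v := by
  intro β
  induction β with
  | nil =>
    intro _ v
    exact ⟨[], List.Sublist.refl _, by rw [wordProd_nil, mul_one]; rfl, by simp [rfold]⟩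
  | cons j β₁ ih =>
    intro hv v
    obtain ⟨hj1, hj2⟩ := hv j (by simp)
    have hv₁ : Valid n β₁ := fun i hi => hv i (by simp [hi])
    have hrf : rfold n v (j :: β₁) = rfold n (dstep n v j) β₁ := rfl
    by_cases hd : len n (v * simpleRefl n j) < len n v
    · obtain ⟨t₁, hs, he, hl⟩ := ih hv₁ (v * simpleRefl n j)
      have hds : dstep n v j = v * simpleRefl n j := if_pos hd
      refine ⟨j :: t₁, List.cons_sublist_cons.mpr hs, ?_, ?_⟩
      · rw [hrf, hds, he, wordProd_cons, mul_assoc]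
      · have hvd : len n (v * simpleRefl n j) + 1 = len n v := by
          have := len_dichot hj1 hj2 v
          omega
        rw [hrf, hds]
        simp only [List.length_cons]
        omega
    · obtain ⟨t₁, hs, he, hl⟩ := ih hv₁ v
      have hds : dstep n v j = v := if_neg hd
      exact ⟨t₁, hs.trans (List.sublist_cons_self j β₁), by rw [hrf, hds]; exact he,
        by rw [hrf, hds]; exact hl⟩

lemma reduced_of_bound {t : List ℕ} (hval : Valid n t) {v m : Equiv.Perm (Fin n)}
    (he : m = v * wordProd n t) (hl : len n m + t.length = len n v) : IsReduced n t := by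
  have h1 : len n (wordProd n t) ≤ t.length := len_le_of_word hval
  have h2 : len n v ≤ len n m + len n (wordProd n t) := by
    have hv : v = m * (wordProd n t)⁻¹ := by rw [he, mul_assoc, mul_inv_cancel, mul_one]
    calc len n v = len n (m * (wordProd n t)⁻¹) := by rw [← hv]
    _ ≤ len n m + len n (wordProd n t)⁻¹ := len_mul_le _ _
    _ = len n m + len n (wordProd n t) := by rw [len_inv]
  exact ⟨hval, by omega⟩

lemma reduced_reverse {l : List ℕ} (h : IsReduced n l) : IsReduced n l.reverse := by
  refine ⟨fun i hi => h.1 i (List.mem_reverse.mp hi), ?_⟩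
  rw [wordProd_reverse, len_inv, h.2]
  simp



/-- If `K ⊆ S_n` has a unique minimal element `u` in the Bruhat order
and `σ₁, σ₂ ∈ S_n`, then `I(σ₁) K I(σ₂)` has a unique minimal element, `I(σ₁) u I(σ₂)`
has a unique minimal element, and these two minima coincide. -/
theorem isBruhatLeast_interval_set_interval (n : ℕ) (hn : 1 ≤ n)
    (K : Set (Equiv.Perm (Fin n))) (u : Equiv.Perm (Fin n)) (hu : IsBruhatLeast n K u)
    (σ₁ σ₂ : Equiv.Perm (Fin n)) :
    ∃ m, IsBruhatLeast n
        {x | ∃ a c b, bruhatLE n a σ₁ ∧ c ∈ K ∧ bruhatLE n b σ₂ ∧ x = a * c * b} m ∧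
      IsBruhatLeast n
        {x | ∃ a b, bruhatLE n a σ₁ ∧ bruhatLE n b σ₂ ∧ x = a * u * b} m := by
  obtain ⟨α, hαr, hαp⟩ := exists_reduced_word (n := n) σ₁
  obtain ⟨β, hβr, hβp⟩ := exists_reduced_word (n := n) σ₂
  have hαrev : IsReduced n α.reverse := reduced_reverse hαr
  have hαrevp : wordProd n α.reverse = σ₁⁻¹ := by rw [wordProd_reverse, hαp]
  set m₁ := rfold n u β with hm₁
  set m := (rfold n m₁⁻¹ α.reverse)⁻¹ with hm
  -- membership
  obtain ⟨tβ, htβs, htβe, htβl⟩ := rfold_mem β hβr.1 u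
  obtain ⟨tα, htαs, htαe, htαl⟩ := rfold_mem α.reverse hαrev.1 m₁⁻¹
  have hbred : IsReduced n tβ := reduced_of_bound (valid_sublist htβs hβr.1) htβe htβl
  have hared : IsReduced n tα := reduced_of_bound (valid_sublist htαs hαrev.1) htαe htαl
  have hb : bruhatLE n (wordProd n tβ) σ₂ := ⟨β, tβ, hβr, hβp, htβs, hbred, rfl⟩
  have haredrev : IsReduced n tα.reverse := reduced_reverse hared
  have htαrs : tα.reverse.Sublist α := by
    have := List.reverse_sublist.mpr htαs
    simpa using this
  have ha : bruhatLE n (wordProd n tα.reverse) σ₁ :=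
    ⟨α, tα.reverse, hαr, hαp, htαrs, haredrev, rfl⟩
  have hmeq : m = wordProd n tα.reverse * u * wordProd n tβ := by
    rw [hm, htαe, mul_inv_rev, inv_inv, wordProd_reverse, hm₁, htβe, mul_assoc]
  -- minimality
  have hmin : ∀ x, (∃ a c b, bruhatLE n a σ₁ ∧ c ∈ K ∧ bruhatLE n b σ₂ ∧ x = a * c * b) →
      bruhatLE n m x := by
    rintro x ⟨a, c, b, haσ, hcK, hbσ, rfl⟩
    have hub : cle n m₁ (c * b) := by
      obtain ⟨tb, htbs, htbr, htbp⟩ := subword_of_cle (len n σ₂) σ₂ le_rfl β hβr hβp b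
        (cle_of_bruhatLE hbσ)
      have h1 := rfold_min β hβr.1 u c (cle_of_bruhatLE (hu.2 c hcK)) tb htbs
      rwa [htbp] at h1
    obtain ⟨ta, htas, htar, htap⟩ := subword_of_cle (len n σ₁⁻¹) σ₁⁻¹ le_rfl α.reverse
      hαrev hαrevp a⁻¹ (cle_inv (cle_of_bruhatLE haσ))
    have h2 := rfold_min α.reverse hαrev.1 m₁⁻¹ (c * b)⁻¹ (cle_inv hub) ta htas
    rw [htap] at h2
    have h3 := cle_inv h2
    rw [hm]
    have h4 : ((c * b)⁻¹ * a⁻¹)⁻¹ = a * c * b := by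
      simp [mul_assoc]
    rw [h4] at h3
    exact bruhatLE_of_cle h3
  refine ⟨m, ⟨⟨wordProd n tα.reverse, u, wordProd n tβ, ha, hu.1, hb, hmeq⟩, hmin⟩,
    ⟨wordProd n tα.reverse, wordProd n tβ, ha, hb, hmeq⟩, ?_⟩
  rintro x ⟨a, b, haσ, hbσ, rfl⟩
  exact hmin _ ⟨a, u, b, haσ, hu.1, hbσ, rfl⟩

end KK
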